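/- Let A : (ℝⁿ)* → ℝⁿ be invertible and define the twisted Hodge operator *^A on l-forms by the requirement ω ∧ (*^A μ) = (ω|μ)_A dx₁∧⋯∧dxₙ for all l-forms ω, μ, where (ω|μ)_A = ⟨(∧ˡA)ω, μ⟩. Let ι : (ℝⁿ)* → ℝⁿ be the identification given by the standard Euclidean structure and * the standard Hodge star. Then: (i) *^A = * ∘ ∧ˡ(ι⁻¹Aᵗ) on l-forms; (ii) *^A is invertible with (*^A)⁻¹ = (−1)^{l(n−l)} ∧ˡ(ι⁻¹Aᵗ)⁻¹ ∘ * on (n−l)-forms; (iii) for an l-form ω and an (n−l)-form μ, (*^A ω) ∧ (*^A μ) = det(ι⁻¹Aᵗ) · ω ∧ μ. -/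

import Mathlib

open Finset

noncomputable section

abbrev FormIdx (n k : ℕ) := {s : Finset (Fin n) // s.card = k}

abbrev KForm (n k : ℕ) := FormIdx n k → ℝ

def subEmb {n k : ℕ} (S : FormIdx n k) : Fin k → Fin n := fun j => (S.1.orderIsoOfFin S.2 j : Fin n)

/-- the bilinear pairing `(ω|μ)_A = ⟨(∧ˡA)ω, μ⟩` -/
def pairingA {n k : ℕ} (A : Matrix (Fin n) (Fin n) ℝ) (u v : KForm n k) : ℝ :=
  ∑ T : FormIdx n k, ∑ S : FormIdx n k,
    (A.submatrix (subEmb S) (subEmb T)).det * u T * v S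

/-- the linear map on `k`-forms induced by a matrix acting on covectors
(e.g. `formMap Aᵀ = ∧ᵏ(ι⁻¹Aᵗ)`) -/
def formMap {n k : ℕ} (B : Matrix (Fin n) (Fin n) ℝ) (u : KForm n k) : KForm n k :=
  fun S => ∑ T : FormIdx n k, (B.submatrix (subEmb S) (subEmb T)).det * u T

/-- sign of the shuffle putting the block `t` before the block `s` -/
def shuffleSign {n : ℕ} (t s : Finset (Fin n)) : ℝ :=
  (-1 : ℝ) ^ (∑ x ∈ t, (s.filter (· < x)).card)

/-- exterior (wedge) product -/
def wedgeP {n k l : ℕ} (α : KForm n k) (β : KForm n l) : KForm n (k + l) :=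
  fun S => ∑ T : FormIdx n k, if h : T.1 ⊆ S.1 then
    shuffleSign T.1 (S.1 \ T.1) * α T * β ⟨S.1 \ T.1, by
      rw [Finset.card_sdiff, Finset.inter_eq_left.mpr h, S.2, T.2]; omega⟩ else 0

/-- the coefficient of `dx₁∧⋯∧dxₙ` of a top-degree form (zero unless `m = n`) -/
def topCoeff {n m : ℕ} (v : KForm n m) : ℝ :=
  if h : m = n then v ⟨Finset.univ, by subst h; simp⟩ else 0

/-- the standard Euclidean Hodge star -/
def hodgeStd {n l : ℕ} (hl : l ≤ n) (μ : KForm n l) : KForm n (n - l) :=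
  fun S => shuffleSign S.1ᶜ S.1 * μ ⟨S.1ᶜ, by
    rw [Finset.card_compl, S.2, Fintype.card_fin]; omega⟩

/-- re-indexing of a form along an equality of degrees -/
def castForm {n m m' : ℕ} (h : m = m') (v : KForm n m) : KForm n m' :=
  fun S => v ⟨S.1, by rw [S.2, h]⟩

namespace TH

open Matrix

variable {n k l : ℕ}

lemma subEmb_strictMono (S : FormIdx n k) : StrictMono (subEmb S) := fun a b h => by
  simpa [subEmb] using (S.1.orderIsoOfFin S.2).strictMono h

lemma subEmb_injective (S : FormIdx n k) : Function.Injective (subEmb S) :=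
  (subEmb_strictMono S).injective

lemma subEmb_mem (S : FormIdx n k) (a : Fin k) : subEmb S a ∈ S.1 := (S.1.orderIsoOfFin S.2 a).2

lemma subEmb_surj (S : FormIdx n k) {x : Fin n} (hx : x ∈ S.1) : ∃ a, subEmb S a = x := by
  obtain ⟨a, ha⟩ := (S.1.orderIsoOfFin S.2).surjective ⟨x, hx⟩
  exact ⟨a, by simp [subEmb, ha]⟩

lemma subEmb_image (S : FormIdx n k) : Finset.image (subEmb S) univ = S.1 := by
  apply Finset.eq_of_subset_of_card_le
  · intro x hx
    simp only [Finset.mem_image, mem_univ, true_and] at hx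
    obtain ⟨a, rfl⟩ := hx; exact subEmb_mem S a
  · rw [Finset.card_image_of_injective _ (subEmb_injective S), card_univ, Fintype.card_fin, S.2]

lemma strictMono_unique {f g : Fin k → Fin n} (hf : StrictMono f) (hg : StrictMono g)
    (h : Finset.image f univ = Finset.image g univ) : f = g := by
  have hcard : (Finset.image g univ).card = k := by
    rw [Finset.card_image_of_injective _ hg.injective, card_univ, Fintype.card_fin]
  have h1 := Finset.orderEmbOfFin_unique hcard
    (f := f) (fun x => by rw [← h]; exact mem_image_of_mem f (mem_univ x)) hf
  have h2 := Finset.orderEmbOfFin_unique hcard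
    (f := g) (fun x => mem_image_of_mem g (mem_univ x)) hg
  rw [h1]; exact h2.symm

def posIn (s : Finset (Fin n)) (x : Fin n) : ℕ := (s.filter (· < x)).card

lemma pos_subEmb (S : FormIdx n k) (a : Fin k) : posIn S.1 (subEmb S a) = (a : ℕ) := by
  have himg : S.1.filter (· < subEmb S a) = Finset.image (subEmb S) (univ.filter (· < a)) := by
    ext x
    simp only [mem_filter, Finset.mem_image, mem_univ, true_and]
    constructor
    · rintro ⟨hxS, hlt⟩
      obtain ⟨b, rfl⟩ := subEmb_surj S hxS
      exact ⟨b, (subEmb_strictMono S).lt_iff_lt.mp hlt, rfl⟩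
    · rintro ⟨b, hb, rfl⟩; exact ⟨subEmb_mem S b, subEmb_strictMono S hb⟩
  unfold posIn
  rw [himg, Finset.card_image_of_injective _ (subEmb_injective S)]
  have : (univ.filter (· < a)) = Finset.Iio a := by ext x; simp
  rw [this]; simp

lemma formCongr (v : KForm n k) {S₁ S₂ : FormIdx n k} (h : S₁.1 = S₂.1) : v S₁ = v S₂ := by
  rw [Subtype.ext h]

lemma diagonal_minor (d : Fin n → ℝ) (S T : FormIdx n k) :
    ((Matrix.diagonal d).submatrix (subEmb S) (subEmb T)).det
      = if S = T then ∏ x ∈ S.1, d x else 0 := by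
  by_cases h : S = T
  · subst h
    rw [if_pos rfl]
    have hdiag : (Matrix.diagonal d).submatrix (subEmb S) (subEmb S)
        = Matrix.diagonal (fun a => d (subEmb S a)) := by
      ext a b
      by_cases hab : a = b
      · subst hab; simp
      · rw [Matrix.submatrix_apply, Matrix.diagonal_apply_ne _ (fun hc => hab (subEmb_injective S hc)),
          Matrix.diagonal_apply_ne _ hab]
    rw [hdiag, Matrix.det_diagonal, ← subEmb_image S,
      Finset.prod_image (fun a _ b _ hab => subEmb_injective S hab)]
  · rw [if_neg h]
    have hns : ¬ T.1 ⊆ S.1 := by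
      intro hsub
      exact h (Subtype.ext (Finset.eq_of_subset_of_card_le hsub (by rw [S.2, T.2])).symm)
    obtain ⟨t, htT, htS⟩ := Finset.not_subset.mp hns
    obtain ⟨b, rfl⟩ := subEmb_surj T htT
    apply Matrix.det_eq_zero_of_column_eq_zero b
    intro a
    rw [Matrix.submatrix_apply]
    exact Matrix.diagonal_apply_ne _ (fun hc => htS (hc ▸ subEmb_mem S a))

lemma one_minor (S T : FormIdx n k) :
    ((1 : Matrix (Fin n) (Fin n) ℝ).submatrix (subEmb S) (subEmb T)).det
      = if S = T then 1 else 0 := by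
  have h1 : (1 : Matrix (Fin n) (Fin n) ℝ) = Matrix.diagonal (fun _ => (1:ℝ)) := by
    rw [Matrix.diagonal_one]
  rw [h1, diagonal_minor]
  simp

lemma formMap_one (u : KForm n k) : formMap (1 : Matrix (Fin n) (Fin n) ℝ) u = u := by
  funext S
  unfold formMap
  rw [Finset.sum_congr rfl (fun T _ => by rw [one_minor])]
  simp

lemma formMap_smul (B : Matrix (Fin n) (Fin n) ℝ) (c : ℝ) (u : KForm n k) :
    formMap B (c • u) = c • formMap B u := by
  funext S
  unfold formMap
  simp only [Pi.smul_apply, smul_eq_mul, Finset.mul_sum]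
  exact Finset.sum_congr rfl fun T _ => by ring

lemma formMap_diagonal (d : Fin n → ℝ) (u : KForm n k) (S : FormIdx n k) :
    formMap (Matrix.diagonal d) u S = (∏ x ∈ S.1, d x) * u S := by
  unfold formMap
  rw [Finset.sum_congr rfl (fun T _ => by rw [diagonal_minor])]
  simp

lemma det_submatrix_zero_of_not_inj (M : Matrix (Fin k) (Fin n) ℝ) {f : Fin k → Fin n}
    (hf : ¬ Function.Injective f) : (M.submatrix id f).det = 0 := by
  obtain ⟨a, b, hab, hne⟩ := Function.not_injective_iff.mp hf
  rw [← Matrix.det_transpose, Matrix.transpose_submatrix]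
  refine Matrix.det_zero_of_row_eq hne ?_
  funext x
  simp [Matrix.submatrix_apply, hab]

def Phi (n k : ℕ) : FormIdx n k × Equiv.Perm (Fin k) → {f : Fin k → Fin n // Function.Injective f} :=
  fun p => ⟨subEmb p.1 ∘ p.2, (subEmb_injective p.1).comp p.2.injective⟩

lemma Phi_bijective : Function.Bijective (Phi n k) := by
  constructor
  · rintro ⟨S, σ⟩ ⟨T, τ⟩ h
    have h' : subEmb S ∘ ⇑σ = subEmb T ∘ ⇑τ := congrArg Subtype.val h
    have hST : S = T := by
      apply Subtype.ext
      have himg : Finset.image (subEmb S ∘ ⇑σ) univ = Finset.image (subEmb T ∘ ⇑τ) univ := by rw [h']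
      rwa [← Finset.image_image, ← Finset.image_image,
        Finset.image_univ_equiv, Finset.image_univ_equiv, subEmb_image, subEmb_image] at himg
    subst hST
    have hστ : σ = τ := Equiv.ext fun a => subEmb_injective S (congrFun h' a)
    rw [hστ]
  · rintro ⟨f, hf⟩
    have hcard : (Finset.image f univ).card = k := by
      rw [Finset.card_image_of_injective _ hf, card_univ, Fintype.card_fin]
    set U : FormIdx n k := ⟨Finset.image f univ, hcard⟩ with hU
    have hmem : ∀ a, f a ∈ U.1 := fun a => mem_image_of_mem f (mem_univ a)
    set g : Fin k → Fin k := fun a => (U.1.orderIsoOfFin U.2).symm ⟨f a, hmem a⟩ with hg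
    have hginj : Function.Injective g := by
      intro a b hab
      apply hf
      have := congrArg (fun z => ((U.1.orderIsoOfFin U.2) z : Fin n)) hab
      simpa [hg] using this
    refine ⟨(U, Equiv.ofBijective g (Finite.injective_iff_bijective.mp hginj)), ?_⟩
    apply Subtype.ext
    funext a
    show subEmb U (g a) = f a
    simp [subEmb, hg]

lemma cauchy_binet (M : Matrix (Fin k) (Fin n) ℝ) (N : Matrix (Fin n) (Fin k) ℝ) :
    (M * N).det = ∑ U : FormIdx n k,
      (M.submatrix id (subEmb U)).det * (N.submatrix (subEmb U) id).det := by
  classical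
  have step1 : (M * N).det = ∑ f : Fin k → Fin n, (∏ i, N (f i) i) * (M.submatrix id f).det := by
    simp only [Matrix.det_apply', Matrix.mul_apply, Finset.prod_univ_sum,
      Fintype.piFinset_univ, Finset.mul_sum]
    rw [Finset.sum_comm]
    refine Finset.sum_congr rfl fun f _ => ?_
    refine Finset.sum_congr rfl fun σ _ => ?_
    rw [Finset.prod_mul_distrib]
    simp only [Matrix.submatrix_apply, id_eq]
    ring
  rw [step1, ← Finset.sum_filter_add_sum_filter_not univ (fun f => Function.Injective f)]
  have h0 : ∑ f ∈ univ.filter (fun f => ¬ Function.Injective f),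
      (∏ i, N (f i) i) * (M.submatrix id f).det = 0 := by
    apply Finset.sum_eq_zero
    intro f hf
    rw [Finset.mem_filter] at hf
    rw [det_submatrix_zero_of_not_inj M hf.2, mul_zero]
  rw [h0, add_zero]
  rw [Finset.sum_subtype (univ.filter (fun f => Function.Injective f))
    (p := fun f => Function.Injective f) (fun x => by simp)
    (fun f => (∏ i, N (f i) i) * (M.submatrix id f).det)]
  rw [← Fintype.sum_bijective (Phi n k) Phi_bijective _
    (fun fp => (∏ i, N (fp.1 i) i) * (M.submatrix id fp.1).det) (fun p => rfl)]
  rw [Fintype.sum_prod_type]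
  refine Finset.sum_congr rfl fun U _ => ?_
  have hdet : ∀ σ : Equiv.Perm (Fin k),
      (M.submatrix id (subEmb U ∘ ⇑σ)).det
        = ((Equiv.Perm.sign σ : ℤ) : ℝ) * (M.submatrix id (subEmb U)).det := by
    intro σ
    have hsub : M.submatrix id (subEmb U ∘ ⇑σ) = (M.submatrix id (subEmb U)).submatrix id ⇑σ := rfl
    rw [hsub, ← Matrix.det_transpose ((M.submatrix id (subEmb U)).submatrix id ⇑σ),
      Matrix.transpose_submatrix, Matrix.det_permute, Matrix.det_transpose]
  have hN : (N.submatrix (subEmb U) id).det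
      = ∑ σ : Equiv.Perm (Fin k), ((Equiv.Perm.sign σ : ℤ) : ℝ) * ∏ i, N (subEmb U (σ i)) i := by
    rw [Matrix.det_apply']
    exact Finset.sum_congr rfl fun σ _ => rfl
  rw [hN, Finset.mul_sum]
  refine Finset.sum_congr rfl fun σ _ => ?_
  show (∏ i, N ((subEmb U ∘ ⇑σ) i) i) * (M.submatrix id (subEmb U ∘ ⇑σ)).det = _
  rw [hdet σ]
  simp only [Function.comp_apply]
  ring

lemma minor_mul (B C : Matrix (Fin n) (Fin n) ℝ) (S T : FormIdx n k) :
    ((B * C).submatrix (subEmb S) (subEmb T)).det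
      = ∑ U : FormIdx n k,
          (B.submatrix (subEmb S) (subEmb U)).det * (C.submatrix (subEmb U) (subEmb T)).det := by
  have hf : (B * C).submatrix (subEmb S) (subEmb T)
      = (B.submatrix (subEmb S) id) * (C.submatrix id (subEmb T)) := by
    ext a b
    simp [Matrix.mul_apply]
  rw [hf, cauchy_binet]
  refine Finset.sum_congr rfl fun U _ => ?_
  rw [Matrix.submatrix_submatrix, Matrix.submatrix_submatrix]
  simp

lemma formMap_mul (B C : Matrix (Fin n) (Fin n) ℝ) (u : KForm n k) :
    formMap (B * C) u = formMap B (formMap C u) := by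
  funext S
  unfold formMap
  rw [Finset.sum_congr rfl (fun T _ => by rw [minor_mul])]
  simp only [Finset.sum_mul, Finset.mul_sum]
  rw [Finset.sum_comm]
  refine Finset.sum_congr rfl fun U _ => ?_
  refine Finset.sum_congr rfl fun T _ => ?_
  ring

def invC (t s : Finset (Fin n)) : ℕ := ∑ x ∈ t, (s.filter (· < x)).card

lemma shuffleSign_eq (t s : Finset (Fin n)) : shuffleSign t s = (-1 : ℝ) ^ invC t s := rfl

lemma posIn_filter_insert {s : Finset (Fin n)} {a : Fin n} (ha : a ∉ s) (x : Fin n) :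
    posIn (insert a s) x = posIn s x + if a < x then 1 else 0 := by
  unfold posIn
  rw [Finset.filter_insert]
  split
  · rw [Finset.card_insert_of_notMem (fun hc => ha (Finset.mem_of_mem_filter _ hc))]
  · rw [add_zero]

lemma posIn_insert_self (s : Finset (Fin n)) (a : Fin n) : posIn (insert a s) a = posIn s a := by
  unfold posIn
  rw [Finset.filter_insert, if_neg (lt_irrefl a)]

lemma invC_insert_left {t : Finset (Fin n)} (s : Finset (Fin n)) {a : Fin n} (ha : a ∉ t) :
    invC (insert a t) s = posIn s a + invC t s := Finset.sum_insert ha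

lemma invC_insert_right (t : Finset (Fin n)) {s : Finset (Fin n)} {a : Fin n} (ha : a ∉ s) :
    invC t (insert a s) = invC t s + (t.filter (a < ·)).card := by
  unfold invC
  rw [Finset.card_filter, ← Finset.sum_add_distrib]
  exact Finset.sum_congr rfl fun x _ => posIn_filter_insert ha x

lemma posIn_partition {u : Finset (Fin n)} {a : Fin n} (ha : a ∉ u) :
    posIn u a + (u.filter (a < ·)).card = u.card := by
  unfold posIn
  have hfe : u.filter (a < ·) = u.filter (fun x => ¬ x < a) := by
    apply Finset.filter_congr
    intro x hx
    have hxa : x ≠ a := fun h => ha (h ▸ hx)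
    constructor
    · exact fun h => lt_asymm h
    · exact fun h => (not_lt.mp h).lt_of_ne (Ne.symm hxa)
  rw [hfe]
  exact Finset.card_filter_add_card_filter_not (p := (· < a))

lemma sign_cancel_core {A B : Finset (Fin n)} {i j : Fin n} (hij : i ≠ j)
    (hiA : i ∉ A) (hjA : j ∉ A) (hiB : i ∉ B) (hjB : j ∉ B) :
    Odd (invC (insert j B) (insert i A) + (posIn (insert j B) j + posIn (insert i B) i)
      + (posIn (insert i A) i + posIn (insert j A) j + invC (insert i B) (insert j A))) := by
  rw [invC_insert_left _ hjB, invC_insert_left _ hiB,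
    invC_insert_right _ hiA, invC_insert_right _ hjA,
    posIn_insert_self, posIn_insert_self, posIn_insert_self, posIn_insert_self,
    posIn_filter_insert hiA j, posIn_filter_insert hjA i]
  have p1 : posIn B i + (B.filter (i < ·)).card = B.card := posIn_partition hiB
  have p2 : posIn B j + (B.filter (j < ·)).card = B.card := posIn_partition hjB
  rw [Nat.odd_iff]
  rcases lt_or_gt_of_ne hij with hlt | hgt
  · rw [if_pos hlt, if_neg (lt_asymm hlt)]
    omega
  · rw [if_neg (lt_asymm hgt), if_pos hgt]
    omega

lemma compl_insert_erase {s : Finset (Fin n)} {i j : Fin n} (hij : i ≠ j) (hi : i ∈ s) (hj : j ∉ s) :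
    (insert j (s.erase i))ᶜ = insert i (sᶜ.erase j) := by
  ext x
  by_cases hxi : x = i
  · subst hxi
    simp [Finset.mem_compl, hij, hi]
  · by_cases hxj : x = j
    · subst hxj
      simp [Finset.mem_compl, Ne.symm hij, hj]
    · simp only [Finset.mem_compl, Finset.mem_insert, Finset.mem_erase, hxi, hxj,
        false_or, not_and, not_or]
      tauto

lemma transvection_apply (i j : Fin n) (c : ℝ) (x y : Fin n) :
    Matrix.transvection i j c x y
      = (if x = y then 1 else 0) + (if i = x ∧ j = y then c else 0) := by
  simp [Matrix.transvection, Matrix.add_apply, Matrix.one_apply, Matrix.single]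

lemma transvection_transpose (i j : Fin n) (c : ℝ) :
    (Matrix.transvection i j c)ᵀ = Matrix.transvection j i c := by
  ext x y
  rw [Matrix.transpose_apply, transvection_apply, transvection_apply,
    if_congr (eq_comm (a := y) (b := x)) rfl rfl,
    if_congr (and_comm (a := i = y) (b := j = x)) rfl rfl]

lemma image_subEmb_succAbove {m : ℕ} (S : FormIdx n (m + 1)) (a₀ : Fin (m + 1)) :
    Finset.image (subEmb S ∘ a₀.succAbove) univ = S.1.erase (subEmb S a₀) := by
  rw [← Finset.image_image]
  have h1 : Finset.image a₀.succAbove univ = univ.erase a₀ := by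
    apply Finset.eq_of_subset_of_card_le
    · intro x hx
      simp only [Finset.mem_image, mem_univ, true_and] at hx
      obtain ⟨b, rfl⟩ := hx
      exact Finset.mem_erase.mpr ⟨Fin.succAbove_ne a₀ b, mem_univ _⟩
    · rw [Finset.card_erase_of_mem (mem_univ _),
        Finset.card_image_of_injective _ (Fin.succAbove_right_injective),
        card_univ, card_univ, Fintype.card_fin, Fintype.card_fin]
      omega
  rw [h1, Finset.image_erase (subEmb_injective S), subEmb_image]

lemma detQ {i j : Fin n} (hij : i ≠ j) (S U : FormIdx n k) (hiS : i ∈ S.1) (hjU : j ∈ U.1)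
    {a₀ b₀ : Fin k} (ha₀ : subEmb S a₀ = i) (hb₀ : subEmb U b₀ = j) :
    (((1 : Matrix (Fin n) (Fin n) ℝ).submatrix (subEmb S) (subEmb U)).updateRow a₀
        (fun b => if b = b₀ then 1 else 0)).det
      = if S.1.erase i = U.1.erase j then (-1 : ℝ) ^ (posIn S.1 i + posIn U.1 j) else 0 := by
  by_cases hjS : j ∈ S.1
  · have herase : S.1.erase i ≠ U.1.erase j := by
      intro he
      have hmem : j ∈ S.1.erase i := Finset.mem_erase.mpr ⟨Ne.symm hij, hjS⟩
      rw [he] at hmem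
      exact (Finset.mem_erase.mp hmem).1 rfl
    rw [if_neg herase]
    obtain ⟨a₁, ha₁⟩ := subEmb_surj S hjS
    have ha₁0 : a₁ ≠ a₀ := by
      intro h
      subst h
      exact hij (by rw [← ha₀, ha₁])
    apply Matrix.det_zero_of_row_eq ha₁0
    rw [Matrix.updateRow_ne ha₁0, Matrix.updateRow_self]
    funext b
    rw [Matrix.submatrix_apply, ha₁, Matrix.one_apply]
    by_cases hb : b = b₀
    · subst hb
      rw [if_pos hb₀.symm, if_pos rfl]
    · rw [if_neg (fun hc => hb (subEmb_injective U (by rw [← hc, hb₀]))), if_neg hb]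
  · rcases k with _ | m
    · exact a₀.elim0
    · rw [Matrix.det_succ_row _ a₀]
      rw [Finset.sum_eq_single b₀]
      rotate_left
      · intro b _ hb
        rw [Matrix.updateRow_self, if_neg hb, mul_zero, zero_mul]
      · intro habs
        exact absurd (mem_univ _) habs
      rw [Matrix.updateRow_self, if_pos rfl, mul_one]
      have hsignS : ((a₀ : ℕ)) = posIn S.1 i := by rw [← ha₀, pos_subEmb]
      have hsignU : ((b₀ : ℕ)) = posIn U.1 j := by rw [← hb₀, pos_subEmb]
      by_cases he : S.1.erase i = U.1.erase j
      · rw [if_pos he]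
        have hfg : subEmb S ∘ a₀.succAbove = subEmb U ∘ b₀.succAbove := by
          apply strictMono_unique
            ((subEmb_strictMono S).comp (Fin.strictMono_succAbove a₀))
            ((subEmb_strictMono U).comp (Fin.strictMono_succAbove b₀))
          rw [image_subEmb_succAbove, image_subEmb_succAbove, ha₀, hb₀, he]
        have hone : ((((1 : Matrix (Fin n) (Fin n) ℝ).submatrix (subEmb S) (subEmb U)).updateRow a₀
            (fun b => if b = b₀ then 1 else 0)).submatrix a₀.succAbove b₀.succAbove) = 1 := by
          ext a b
          rw [Matrix.submatrix_apply, Matrix.updateRow_ne (Fin.succAbove_ne a₀ a),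
            Matrix.submatrix_apply, Matrix.one_apply, Matrix.one_apply]
          have : subEmb S (a₀.succAbove a) = subEmb U (b₀.succAbove a) := congrFun hfg a
          by_cases hab : a = b
          · subst hab
            rw [if_pos this, if_pos rfl]
          · rw [if_neg, if_neg hab]
            intro hc
            apply hab
            apply Fin.succAbove_right_injective (p := b₀)
            apply subEmb_injective U
            exact (congrFun hfg a).symm.trans hc
        rw [hone, Matrix.det_one, mul_one, hsignS, hsignU]
      · rw [if_neg he]
        have hcard : (U.1.erase j).card = (S.1.erase i).card := by
          rw [Finset.card_erase_of_mem hjU, Finset.card_erase_of_mem hiS, S.2, U.2]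
        have hns : ¬ (U.1.erase j ⊆ S.1.erase i) := by
          intro hsub
          exact he (Finset.eq_of_subset_of_card_le hsub (le_of_eq hcard.symm)).symm
        obtain ⟨y, hyU, hyS⟩ := Finset.not_subset.mp hns
        have hyimg : y ∈ Finset.image (subEmb U ∘ b₀.succAbove) univ := by
          rw [image_subEmb_succAbove, hb₀]; exact hyU
        simp only [Finset.mem_image, mem_univ, true_and] at hyimg
        obtain ⟨b, hb⟩ := hyimg
        have hzero : ((((1 : Matrix (Fin n) (Fin n) ℝ).submatrix (subEmb S) (subEmb U)).updateRow a₀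
            (fun b => if b = b₀ then 1 else 0)).submatrix a₀.succAbove b₀.succAbove).det = 0 := by
          apply Matrix.det_eq_zero_of_column_eq_zero b
          intro a
          rw [Matrix.submatrix_apply, Matrix.updateRow_ne (Fin.succAbove_ne a₀ a),
            Matrix.submatrix_apply, Matrix.one_apply, if_neg]
          intro hc
          apply hyS
          have hmem2 : subEmb S (a₀.succAbove a) ∈ Finset.image (subEmb S ∘ a₀.succAbove) univ :=
            Finset.mem_image_of_mem _ (mem_univ a)
          rw [image_subEmb_succAbove, ha₀] at hmem2
          have hb' : subEmb U (b₀.succAbove b) = y := hb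
          rw [← hb', ← hc]
          exact hmem2
        rw [hzero, mul_zero]

lemma transvection_minor {i j : Fin n} (hij : i ≠ j) (c : ℝ) (S U : FormIdx n k) :
    ((Matrix.transvection i j c).submatrix (subEmb S) (subEmb U)).det
      = (if S = U then 1 else 0)
        + c * (if i ∈ S.1 ∧ j ∈ U.1 ∧ S.1.erase i = U.1.erase j
               then (-1 : ℝ) ^ (posIn S.1 i + posIn U.1 j) else 0) := by
  by_cases hiS : i ∈ S.1
  · by_cases hjU : j ∈ U.1
    · obtain ⟨a₀, ha₀⟩ := subEmb_surj S hiS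
      obtain ⟨b₀, hb₀⟩ := subEmb_surj U hjU
      have hM : (Matrix.transvection i j c).submatrix (subEmb S) (subEmb U)
          = ((1 : Matrix (Fin n) (Fin n) ℝ).submatrix (subEmb S) (subEmb U)).updateRow a₀
              (((1 : Matrix (Fin n) (Fin n) ℝ).submatrix (subEmb S) (subEmb U)) a₀
                + fun b => c * (if b = b₀ then (1:ℝ) else 0)) := by
        ext a b
        by_cases ha : a = a₀
        · subst ha
          rw [Matrix.updateRow_self]
          simp only [Pi.add_apply, Matrix.submatrix_apply, transvection_apply, Matrix.one_apply]
          congr 1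
          by_cases hb : b = b₀
          · subst hb
            rw [if_pos ⟨ha₀.symm, hb₀.symm⟩, if_pos rfl, mul_one]
          · rw [if_neg (fun hc => hb (subEmb_injective U (by rw [hb₀, ← hc.2]))),
              if_neg hb, mul_zero]
        · rw [Matrix.updateRow_ne ha]
          simp only [Matrix.submatrix_apply, transvection_apply, Matrix.one_apply]
          rw [if_neg (show ¬ (i = subEmb S a ∧ j = subEmb U b) from
            fun hc => ha (subEmb_injective S (by rw [ha₀, ← hc.1]))), add_zero]
      have hsmul : (fun b => c * (if b = b₀ then (1:ℝ) else 0))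
          = c • (fun b => if b = b₀ then (1:ℝ) else 0) := rfl
      rw [hM, Matrix.det_updateRow_add, hsmul, Matrix.det_updateRow_smul,
        Matrix.updateRow_eq_self, one_minor, detQ hij S U hiS hjU ha₀ hb₀]
      congr 1
      by_cases he : S.1.erase i = U.1.erase j
      · rw [if_pos he, if_pos ⟨hiS, hjU, he⟩]
      · rw [if_neg he, if_neg (show ¬ (i ∈ S.1 ∧ j ∈ U.1 ∧ S.1.erase i = U.1.erase j) from
          fun hc => he hc.2.2)]
    · have hsub : (Matrix.transvection i j c).submatrix (subEmb S) (subEmb U)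
          = (1 : Matrix (Fin n) (Fin n) ℝ).submatrix (subEmb S) (subEmb U) := by
        ext a b
        simp only [Matrix.submatrix_apply, transvection_apply, Matrix.one_apply]
        rw [if_neg (show ¬ (i = subEmb S a ∧ j = subEmb U b) from
          fun hc => hjU (hc.2 ▸ subEmb_mem U b)), add_zero]
      have hcond : ¬ (i ∈ S.1 ∧ j ∈ U.1 ∧ S.1.erase i = U.1.erase j) := fun hc => hjU hc.2.1
      rw [hsub, one_minor, if_neg hcond, mul_zero, add_zero]
  · have hsub : (Matrix.transvection i j c).submatrix (subEmb S) (subEmb U)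
        = (1 : Matrix (Fin n) (Fin n) ℝ).submatrix (subEmb S) (subEmb U) := by
      ext a b
      simp only [Matrix.submatrix_apply, transvection_apply, Matrix.one_apply]
      rw [if_neg (show ¬ (i = subEmb S a ∧ j = subEmb U b) from
        fun hc => hiS (hc.1 ▸ subEmb_mem S a)), add_zero]
    have hcond : ¬ (i ∈ S.1 ∧ j ∈ U.1 ∧ S.1.erase i = U.1.erase j) := fun hc => hiS hc.1
    rw [hsub, one_minor, if_neg hcond, mul_zero, add_zero]

lemma formMap_transvection {i j : Fin n} (hij : i ≠ j) (c : ℝ) (u : KForm n k) (S : FormIdx n k) :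
    formMap (Matrix.transvection i j c) u S
      = u S + (if h : i ∈ S.1 ∧ j ∉ S.1 then
          c * (-1 : ℝ) ^ (posIn S.1 i + posIn (insert j (S.1.erase i)) j) *
            u ⟨insert j (S.1.erase i), by
              have h0 : 0 < k := S.2 ▸ Finset.card_pos.mpr ⟨i, h.1⟩
              rw [Finset.card_insert_of_notMem (fun hc => h.2 (Finset.mem_of_mem_erase hc)),
                Finset.card_erase_of_mem h.1, S.2]
              omega⟩
        else 0) := by
  unfold formMap
  rw [Finset.sum_congr rfl (fun T (_ : T ∈ univ) => by
    rw [transvection_minor hij c S T, add_mul])]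
  rw [Finset.sum_add_distrib]
  congr 1
  · simp
  · by_cases h : i ∈ S.1 ∧ j ∉ S.1
    · rw [dif_pos h]
      have hins : (insert j (S.1.erase i)).card = k := by
        have h0 : 0 < k := S.2 ▸ Finset.card_pos.mpr ⟨i, h.1⟩
        rw [Finset.card_insert_of_notMem (fun hc => h.2 (Finset.mem_of_mem_erase hc)),
          Finset.card_erase_of_mem h.1, S.2]
        omega
      rw [Finset.sum_eq_single (⟨insert j (S.1.erase i), hins⟩ : FormIdx n k)]
      · rw [if_pos ⟨h.1, Finset.mem_insert_self _ _, by
          rw [Finset.erase_insert (fun hc => h.2 (Finset.mem_of_mem_erase hc))]⟩]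
      · intro T _ hT
        rw [if_neg, mul_zero, zero_mul]
        rintro ⟨-, hjT, he⟩
        apply hT
        apply Subtype.ext
        show T.1 = insert j (S.1.erase i)
        rw [← Finset.insert_erase hjT, ← he]
      · intro habs
        exact absurd (mem_univ _) habs
    · rw [dif_neg h]
      apply Finset.sum_eq_zero
      intro T _
      rw [if_neg, mul_zero, zero_mul]
      rintro ⟨h1, h2, h3⟩
      apply h
      refine ⟨h1, fun hjS => ?_⟩
      have hmem : j ∈ S.1.erase i := Finset.mem_erase.mpr ⟨Ne.symm hij, hjS⟩
      rw [h3] at hmem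
      exact (Finset.mem_erase.mp hmem).1 rfl

lemma invC_add_invC {t s : Finset (Fin n)} (h : Disjoint t s) :
    invC t s + invC s t = t.card * s.card := by
  unfold invC
  have h1 : ∀ u v : Finset (Fin n), (∑ x ∈ u, (v.filter (· < x)).card)
      = ∑ x ∈ u, ∑ y ∈ v, if y < x then 1 else 0 := by
    intro u v
    exact Finset.sum_congr rfl fun x _ => Finset.card_filter _ _
  rw [h1, h1, Finset.sum_comm (s := s) (t := t), ← Finset.sum_add_distrib]
  have : ∀ x ∈ t, (∑ y ∈ s, if y < x then 1 else 0) + (∑ y ∈ s, if x < y then 1 else 0)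
      = s.card := by
    intro x hx
    rw [← Finset.sum_add_distrib]
    rw [Finset.sum_congr rfl (fun y hy => ?_), Finset.sum_const, smul_eq_mul, mul_one]
    have hxy : y ≠ x := fun hc => (Finset.disjoint_left.mp h) hx (hc ▸ hy)
    rcases lt_or_gt_of_ne hxy with hlt | hgt
    · rw [if_pos hlt, if_neg (lt_asymm hlt)]
      omega
    · rw [if_neg (lt_asymm hgt), if_pos hgt]
      omega
  rw [Finset.sum_congr rfl this, Finset.sum_const, smul_eq_mul]

lemma shuffle_mul_self (t s : Finset (Fin n)) : shuffleSign t s * shuffleSign t s = 1 := by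
  rw [shuffleSign_eq, ← pow_add]
  exact Even.neg_one_pow ⟨invC t s, rfl⟩

lemma shuffle_ne_zero (t s : Finset (Fin n)) : shuffleSign t s ≠ 0 := by
  rw [shuffleSign_eq]
  exact pow_ne_zero _ (by norm_num)

lemma shuffle_pair (s : Finset (Fin n)) :
    shuffleSign sᶜ s * shuffleSign s sᶜ = (-1 : ℝ) ^ (sᶜ.card * s.card) := by
  rw [shuffleSign_eq, shuffleSign_eq, ← pow_add, invC_add_invC (disjoint_compl_left)]

lemma neg_one_pow_add_eq_zero {a b : ℕ} (h : Odd (a + b)) : (-1 : ℝ) ^ a + (-1 : ℝ) ^ b = 0 := by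
  have h1 : (-1 : ℝ) ^ a * (-1 : ℝ) ^ b = -1 := by
    rw [← pow_add]; exact Odd.neg_one_pow h
  have h2 : (-1 : ℝ) ^ b * (-1 : ℝ) ^ b = 1 := by
    rw [← pow_add]; exact Even.neg_one_pow ⟨b, rfl⟩
  linear_combination ((-1 : ℝ) ^ b) * h1 - ((-1 : ℝ) ^ a) * h2

def complEquiv (hk : k ≤ n) : FormIdx n k ≃ FormIdx n (n - k) where
  toFun T := ⟨T.1ᶜ, by rw [Finset.card_compl, T.2, Fintype.card_fin]⟩
  invFun S := ⟨S.1ᶜ, by rw [Finset.card_compl, S.2, Fintype.card_fin]; omega⟩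
  left_inv T := Subtype.ext (compl_compl T.1)
  right_inv S := Subtype.ext (compl_compl S.1)

lemma wedge_hodge (hk : k ≤ n) (ω ν : KForm n k) :
    topCoeff (wedgeP ω (hodgeStd hk ν)) = ∑ T : FormIdx n k, ω T * ν T := by
  unfold topCoeff
  rw [dif_pos (show k + (n - k) = n by omega)]
  unfold wedgeP
  refine Finset.sum_congr rfl fun T _ => ?_
  rw [dif_pos (Finset.subset_univ _)]
  have h1 : univ \ T.1 = T.1ᶜ := (Finset.compl_eq_univ_sdiff T.1).symm
  rw [formCongr (hodgeStd hk ν) (show univ \ T.1 = (⟨T.1ᶜ, by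
    rw [Finset.card_compl, T.2, Fintype.card_fin]⟩ : FormIdx n (n - k)).1 from h1)]
  unfold hodgeStd
  rw [formCongr ν (show (T.1ᶜ)ᶜ = T.1 from compl_compl T.1)]
  rw [h1, compl_compl]
  have hTT : ν (⟨T.1, T.2⟩ : FormIdx n k) = ν T := rfl
  rw [hTT]
  have := shuffle_mul_self T.1 T.1ᶜ
  linear_combination (ω T * ν T) * this

lemma hodge_pair (hk : k ≤ n) (a : KForm n k) (b : KForm n (n - k)) :
    ∑ S : FormIdx n (n - k), hodgeStd hk a S * b S = topCoeff (wedgeP a b) := by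
  unfold topCoeff
  rw [dif_pos (show k + (n - k) = n by omega)]
  unfold wedgeP
  rw [← Equiv.sum_comp (complEquiv hk) (fun S => hodgeStd hk a S * b S)]
  refine Finset.sum_congr rfl fun T _ => ?_
  rw [dif_pos (Finset.subset_univ _)]
  show hodgeStd hk a ⟨T.1ᶜ, _⟩ * b ⟨T.1ᶜ, _⟩ = _
  unfold hodgeStd
  rw [formCongr a (show (T.1ᶜ)ᶜ = T.1 from compl_compl T.1), compl_compl]
  have h1 : univ \ T.1 = T.1ᶜ := (Finset.compl_eq_univ_sdiff T.1).symm
  rw [formCongr b (show (⟨univ \ T.1, by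
    rw [Finset.card_sdiff_of_subset (Finset.subset_univ _), card_univ, Fintype.card_fin, T.2]⟩
      : FormIdx n (n - k)).1 = T.1ᶜ from h1).symm]
  have hTT : a (⟨T.1, T.2⟩ : FormIdx n k) = a T := rfl
  rw [hTT, show shuffleSign T.1 (univ \ T.1) = shuffleSign T.1 T.1ᶜ from by rw [h1]]

lemma wedge_nondeg (hk : k ≤ n) {ν ν' : KForm n (n - k)}
    (h : ∀ ω : KForm n k, topCoeff (wedgeP ω ν) = topCoeff (wedgeP ω ν')) : ν = ν' := by
  have hcomp : ∀ (T₀ : FormIdx n k) (μ : KForm n (n - k)),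
      topCoeff (wedgeP (fun T => if T = T₀ then (1:ℝ) else 0) μ)
        = shuffleSign T₀.1 (univ \ T₀.1) * μ ⟨univ \ T₀.1, by
            rw [Finset.card_sdiff_of_subset (Finset.subset_univ _), card_univ, Fintype.card_fin, T₀.2]⟩ := by
    intro T₀ μ
    unfold topCoeff wedgeP
    rw [dif_pos (show k + (n - k) = n by omega)]
    rw [Finset.sum_eq_single T₀]
    · rw [dif_pos (Finset.subset_univ _)]
      simp
    · intro T _ hne
      rw [dif_pos (Finset.subset_univ _)]
      simp [hne]
    · intro habs
      exact absurd (mem_univ _) habs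
  funext S
  have hT0card : (S.1ᶜ).card = k := by
    rw [Finset.card_compl, S.2, Fintype.card_fin]; omega
  have hkey := h (fun T => if T = (⟨S.1ᶜ, hT0card⟩ : FormIdx n k) then (1:ℝ) else 0)
  rw [hcomp, hcomp] at hkey
  have hidx : (univ \ S.1ᶜ) = S.1 := by
    rw [← Finset.compl_eq_univ_sdiff, compl_compl]
  rw [formCongr ν (show (⟨univ \ S.1ᶜ, by
      rw [Finset.card_sdiff_of_subset (Finset.subset_univ _), card_univ, Fintype.card_fin, hT0card]⟩
        : FormIdx n (n - k)).1 = S.1 from hidx),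
    formCongr ν' (show (⟨univ \ S.1ᶜ, by
      rw [Finset.card_sdiff_of_subset (Finset.subset_univ _), card_univ, Fintype.card_fin, hT0card]⟩
        : FormIdx n (n - k)).1 = S.1 from hidx)] at hkey
  exact mul_left_cancel₀ (shuffle_ne_zero _ _) hkey

lemma pairingA_eq_left (A : Matrix (Fin n) (Fin n) ℝ) (u v : KForm n k) :
    pairingA A u v = ∑ S : FormIdx n k, formMap A u S * v S := by
  unfold pairingA formMap
  rw [Finset.sum_comm]
  refine Finset.sum_congr rfl fun S _ => ?_
  rw [Finset.sum_mul]

lemma pairingA_eq_right (A : Matrix (Fin n) (Fin n) ℝ) (u v : KForm n k) :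
    pairingA A u v = ∑ T : FormIdx n k, u T * formMap A.transpose v T := by
  unfold pairingA formMap
  refine Finset.sum_congr rfl fun T _ => ?_
  rw [Finset.mul_sum]
  refine Finset.sum_congr rfl fun S _ => ?_
  rw [← Matrix.det_transpose (A.submatrix (subEmb S) (subEmb T)), Matrix.transpose_submatrix]
  ring

lemma hodge_smul (hk : k ≤ n) (c : ℝ) (u : KForm n k) :
    hodgeStd hk (c • u) = c • hodgeStd hk u := by
  funext S
  unfold hodgeStd
  simp only [Pi.smul_apply, smul_eq_mul]
  ring

lemma hodge_hodge₁ (hl : l ≤ n) (ν : KForm n (n - l)) :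
    hodgeStd hl (castForm (Nat.sub_sub_self hl) (hodgeStd (Nat.sub_le n l) ν))
      = (-1 : ℝ) ^ (l * (n - l)) • ν := by
  funext S
  show shuffleSign S.1ᶜ S.1 * (shuffleSign (S.1ᶜ)ᶜ S.1ᶜ * ν ⟨(S.1ᶜ)ᶜ, by
      rw [compl_compl]; exact S.2⟩) = ((-1 : ℝ) ^ (l * (n - l)) • ν) S
  rw [formCongr ν (show ((S.1ᶜ)ᶜ : Finset (Fin n)) = S.1 from compl_compl S.1), compl_compl]
  have hSS : ν (⟨S.1, S.2⟩ : FormIdx n (n - l)) = ν S := rfl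
  rw [hSS]
  simp only [Pi.smul_apply, smul_eq_mul]
  have hp := shuffle_pair S.1
  have hcard : (S.1ᶜ).card = l := by
    rw [Finset.card_compl, S.2, Fintype.card_fin]; omega
  rw [hcard, S.2] at hp
  linear_combination (ν S) * hp

lemma hodge_hodge₂ (hl : l ≤ n) (w : KForm n l) :
    castForm (Nat.sub_sub_self hl) (hodgeStd (Nat.sub_le n l) (hodgeStd hl w))
      = (-1 : ℝ) ^ (l * (n - l)) • w := by
  funext S
  show shuffleSign S.1ᶜ S.1 * (shuffleSign (S.1ᶜ)ᶜ S.1ᶜ * w ⟨(S.1ᶜ)ᶜ, by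
      rw [compl_compl]; exact S.2⟩) = ((-1 : ℝ) ^ (l * (n - l)) • w) S
  rw [formCongr w (show ((S.1ᶜ)ᶜ : Finset (Fin n)) = S.1 from compl_compl S.1), compl_compl]
  have hSS : w (⟨S.1, S.2⟩ : FormIdx n l) = w S := rfl
  rw [hSS]
  simp only [Pi.smul_apply, smul_eq_mul]
  have hp := shuffle_pair S.1
  have hcard : (S.1ᶜ).card = n - l := by
    rw [Finset.card_compl, S.2, Fintype.card_fin]
  rw [hcard, S.2, mul_comm (n - l) l] at hp
  linear_combination (w S) * hp

lemma hodgeStd_apply (hk : k ≤ n) (u : KForm n k) (S : FormIdx n (n - k)) :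
    hodgeStd hk u S = shuffleSign S.1ᶜ S.1 * u ⟨S.1ᶜ, by
      rw [Finset.card_compl, S.2, Fintype.card_fin]; omega⟩ := rfl

lemma star_identity (hl : l ≤ n) (M : Matrix (Fin n) (Fin n) ℝ) :
    ∀ ω : KForm n l, formMap M (hodgeStd hl (formMap M.transpose ω)) = M.det • hodgeStd hl ω := by
  refine Matrix.diagonal_transvection_induction
    (fun B => ∀ ω : KForm n l,
      formMap B (hodgeStd hl (formMap B.transpose ω)) = B.det • hodgeStd hl ω)
    M (fun D _ => ?_) (fun t => ?_) (fun B C hB hC => ?_)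
  · -- diagonal case
    intro ω
    funext S
    rw [Matrix.diagonal_transpose, formMap_diagonal, hodgeStd_apply, formMap_diagonal,
      Pi.smul_apply, hodgeStd_apply, smul_eq_mul, Matrix.det_diagonal]
    have hprod := Finset.prod_mul_prod_compl S.1 D
    have hval : ((⟨S.1ᶜ, by rw [Finset.card_compl, S.2, Fintype.card_fin]; omega⟩ :
        FormIdx n l)).1 = S.1ᶜ := rfl
    rw [hval]
    linear_combination (shuffleSign S.1ᶜ S.1 * ω ⟨S.1ᶜ, by
      rw [Finset.card_compl, S.2, Fintype.card_fin]; omega⟩) * hprod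
  · -- transvection case
    intro ω
    obtain ⟨i, j, hij, c⟩ := t
    show formMap (Matrix.transvection i j c)
        (hodgeStd hl (formMap (Matrix.transvection i j c).transpose ω))
      = (Matrix.transvection i j c).det • hodgeStd hl ω
    rw [transvection_transpose, Matrix.det_transvection_of_ne i j hij c, one_smul]
    funext S
    rw [formMap_transvection hij c _ S]
    by_cases h : i ∈ S.1 ∧ j ∉ S.1
    · obtain ⟨hi, hj⟩ := h
      rw [dif_pos ⟨hi, hj⟩]
      have hjc : j ∈ S.1ᶜ := Finset.mem_compl.mpr hj
      have hic : i ∉ S.1ᶜ := fun hc => (Finset.mem_compl.mp hc) hi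
      have hcard1 : (S.1ᶜ).card = l := by
        rw [Finset.card_compl, S.2, Fintype.card_fin]; omega
      have hins : (insert j (S.1.erase i)).card = n - l := by
        have h0 : 0 < n - l := S.2 ▸ Finset.card_pos.mpr ⟨i, hi⟩
        rw [Finset.card_insert_of_notMem (fun hc => hj (Finset.mem_of_mem_erase hc)),
          Finset.card_erase_of_mem hi, S.2]
        omega
      have hDcard : (insert i (S.1ᶜ.erase j)).card = l := by
        have h0 : 0 < l := hcard1 ▸ Finset.card_pos.mpr ⟨j, hjc⟩
        rw [Finset.card_insert_of_notMem (fun hc => hic (Finset.mem_of_mem_erase hc)),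
          Finset.card_erase_of_mem hjc, hcard1]
        omega
      simp only [hodgeStd_apply]
      -- compl of the inserted index
      have hcompl : ((⟨insert j (S.1.erase i), hins⟩ : FormIdx n (n - l))).1ᶜ
          = insert i (S.1ᶜ.erase j) := compl_insert_erase hij hi hj
      rw [formCongr (formMap (Matrix.transvection j i c) ω)
        (S₁ := ⟨((⟨insert j (S.1.erase i), hins⟩ : FormIdx n (n - l))).1ᶜ, by
          rw [hcompl]; exact hDcard⟩)
        (S₂ := ⟨insert i (S.1ᶜ.erase j), hDcard⟩) hcompl]
      rw [show shuffleSign ((⟨insert j (S.1.erase i), hins⟩ : FormIdx n (n - l))).1ᶜ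
          ((⟨insert j (S.1.erase i), hins⟩ : FormIdx n (n - l))).1
        = shuffleSign (insert i (S.1ᶜ.erase j)) (insert j (S.1.erase i)) from by rw [hcompl]]
      rw [formMap_transvection (Ne.symm hij) c ω ⟨S.1ᶜ, hcard1⟩]
      rw [formMap_transvection (Ne.symm hij) c ω ⟨insert i (S.1ᶜ.erase j), hDcard⟩]
      rw [dif_pos (show j ∈ (⟨S.1ᶜ, hcard1⟩ : FormIdx n l).1
          ∧ i ∉ (⟨S.1ᶜ, hcard1⟩ : FormIdx n l).1 from ⟨hjc, hic⟩)]
      rw [dif_neg (show ¬ (j ∈ (⟨insert i (S.1ᶜ.erase j), hDcard⟩ : FormIdx n l).1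
          ∧ i ∉ (⟨insert i (S.1ᶜ.erase j), hDcard⟩ : FormIdx n l).1) from by
        rintro ⟨hjm, -⟩
        rcases Finset.mem_insert.mp hjm with hc | hc
        · exact hij hc.symm
        · exact (Finset.mem_erase.mp hc).1 rfl), add_zero]
      -- normalize coerced indices
      rw [show posIn (⟨S.1ᶜ, hcard1⟩ : FormIdx n l).1 j
          + posIn (insert i ((⟨S.1ᶜ, hcard1⟩ : FormIdx n l).1.erase j)) i
        = posIn S.1ᶜ j + posIn (insert i (S.1ᶜ.erase j)) i from rfl]
      rw [formCongr ω
        (S₁ := ⟨insert i ((⟨S.1ᶜ, hcard1⟩ : FormIdx n l).1.erase j), hDcard⟩)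
        (S₂ := ⟨insert i (S.1ᶜ.erase j), hDcard⟩) rfl]
      -- the sign cancellation
      have hodd := sign_cancel_core (A := S.1.erase i) (B := S.1ᶜ.erase j) hij
        (Finset.notMem_erase i S.1) (fun hc => hj (Finset.mem_of_mem_erase hc))
        (fun hc => hic (Finset.mem_of_mem_erase hc)) (Finset.notMem_erase j S.1ᶜ)
      rw [Finset.insert_erase hi, Finset.insert_erase hjc] at hodd
      have hzero : shuffleSign S.1ᶜ S.1
            * (-1 : ℝ) ^ (posIn S.1ᶜ j + posIn (insert i (S.1ᶜ.erase j)) i)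
          + (-1 : ℝ) ^ (posIn S.1 i + posIn (insert j (S.1.erase i)) j)
            * shuffleSign (insert i (S.1ᶜ.erase j)) (insert j (S.1.erase i)) = 0 := by
        rw [shuffleSign_eq, shuffleSign_eq, ← pow_add, ← pow_add]
        apply neg_one_pow_add_eq_zero
        rw [Nat.odd_iff] at hodd ⊢
        omega
      linear_combination (c * ω ⟨insert i (S.1ᶜ.erase j), hDcard⟩) * hzero
    · rw [dif_neg h, add_zero]
      simp only [hodgeStd_apply]
      rw [formMap_transvection (Ne.symm hij) c ω ⟨S.1ᶜ, by
        rw [Finset.card_compl, S.2, Fintype.card_fin]; omega⟩]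
      rw [dif_neg (show ¬ (j ∈ (⟨S.1ᶜ, by
          rw [Finset.card_compl, S.2, Fintype.card_fin]; omega⟩ : FormIdx n l).1
          ∧ i ∉ (⟨S.1ᶜ, by
          rw [Finset.card_compl, S.2, Fintype.card_fin]; omega⟩ : FormIdx n l).1) from by
        rintro ⟨h1, h2⟩
        exact h ⟨not_not.mp (fun hns => h2 (Finset.mem_compl.mpr hns)),
          Finset.mem_compl.mp h1⟩), add_zero]
  · -- multiplication case
    intro ω
    rw [Matrix.transpose_mul, formMap_mul, formMap_mul, hC (formMap B.transpose ω),
      formMap_smul, hB ω, Matrix.det_mul, smul_smul, mul_comm B.det C.det]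

end TH

/-- Properties of the twisted Hodge operator `*^A`, characterized by
`ω ∧ (*^A μ) = (ω|μ)_A dx`:  (i) `*^A = * ∘ ∧ˡ(ι⁻¹Aᵗ)`; (ii) `*^A` is invertible with
`(*^A)⁻¹ = (−1)^{l(n−l)} ∧ˡ(ι⁻¹Aᵗ)⁻¹ ∘ *`; (iii) `(*^A ω) ∧ (*^A μ) = det(ι⁻¹Aᵗ)·ω ∧ μ`. -/
theorem twisted_hodge_properties {n l : ℕ} (hl : l ≤ n)
    (A : Matrix (Fin n) (Fin n) ℝ) (hA : IsUnit A.det)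
    (star₁ : KForm n l → KForm n (n - l))
    (star₂ : KForm n (n - l) → KForm n (n - (n - l)))
    (hstar₁ : ∀ ω μ : KForm n l, topCoeff (wedgeP ω (star₁ μ)) = pairingA A ω μ)
    (hstar₂ : ∀ ω μ : KForm n (n - l), topCoeff (wedgeP ω (star₂ μ)) = pairingA A ω μ) :
    (∀ μ : KForm n l, star₁ μ = hodgeStd hl (formMap A.transpose μ)) ∧
    (∀ ν : KForm n (n - l),
      star₁ ((-1 : ℝ) ^ (l * (n - l)) •
        formMap A.transpose⁻¹ (castForm (by omega) (hodgeStd (Nat.sub_le n l) ν))) = ν) ∧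
    (∀ μ : KForm n l,
      (-1 : ℝ) ^ (l * (n - l)) •
        formMap A.transpose⁻¹ (castForm (by omega) (hodgeStd (Nat.sub_le n l) (star₁ μ)))
      = μ) ∧
    (∀ (ω : KForm n l) (μ : KForm n (n - l)),
      topCoeff (wedgeP (star₁ ω) (star₂ μ)) = A.transpose.det * topCoeff (wedgeP ω μ)) := by
  have hAT : IsUnit A.transpose.det := by rwa [Matrix.det_transpose]
  have part1 : ∀ μ : KForm n l, star₁ μ = hodgeStd hl (formMap A.transpose μ) := by
    intro μ
    apply TH.wedge_nondeg hl
    intro ω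
    rw [hstar₁, TH.wedge_hodge hl, TH.pairingA_eq_right]
  refine ⟨part1, ?_, ?_, ?_⟩
  · intro ν
    rw [part1, TH.formMap_smul, TH.hodge_smul hl, ← TH.formMap_mul,
      Matrix.mul_nonsing_inv _ hAT, TH.formMap_one, TH.hodge_hodge₁ hl ν,
      smul_smul, ← pow_add, Even.neg_one_pow ⟨l * (n - l), rfl⟩, one_smul]
  · intro μ
    rw [part1, TH.hodge_hodge₂ hl (formMap A.transpose μ), TH.formMap_smul,
      ← TH.formMap_mul, Matrix.nonsing_inv_mul _ hAT, TH.formMap_one,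
      smul_smul, ← pow_add, Even.neg_one_pow ⟨l * (n - l), rfl⟩, one_smul]
  · intro ω μ
    rw [hstar₂ (star₁ ω) μ, TH.pairingA_eq_left, part1 ω, TH.star_identity hl A ω,
      ← Matrix.det_transpose A, ← TH.hodge_pair hl ω μ, Finset.mul_sum]
    refine Finset.sum_congr rfl fun S _ => ?_
    rw [Pi.smul_apply, smul_eq_mul]
    ring
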